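/- Let ρ be a qubit density matrix with Bloch vector r = (r_x, r_y, r_z) ∈ ℝ³, |r|² ≤ 1, with |r_y| < 1. Then for every real qubit density matrix σ (a 2×2 positive semidefinite matrix of trace 1 with σ = σ*), one has F(ρ,σ)² ≤ (1 + √(1 − r_y²))/2, and the maximum is attained at the real state σ⋆ = (1/2)·[[1 + z₀, x₀], [x₀, 1 − z₀]] with x₀ = r_x/√(1 − r_y²) and z₀ = r_z/√(1 − r_y²); that is, F(ρ, σ⋆)² = (1 + √(1 − r_y²))/2. -/

import Mathlib

open Matrix Complex ComplexOrder Classical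

open scoped MatrixOrder in
/-- The positive semidefinite square root of a matrix (junk value `0` if not PSD). -/
noncomputable def psqrt {n : Type*} [Fintype n] [DecidableEq n] (A : Matrix n n ℂ) :
    Matrix n n ℂ :=
  if h : A.PosSemidef then CFC.sqrt A else 0

/-- Entrywise complex conjugate of a matrix. -/
def mconj {m n : Type*} (A : Matrix m n ℂ) : Matrix m n ℂ := A.map (starRingEnd ℂ)

/-- Fidelity `F(ρ,σ) = Tr √(√ρ σ √ρ)`. -/
noncomputable def fidelity {n : Type*} [Fintype n] [DecidableEq n] (ρ σ : Matrix n n ℂ) : ℝ :=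
  ((psqrt (psqrt ρ * σ * psqrt ρ)).trace).re

/-- The real part state `Re(ρ) = (ρ + ρ*)/2`. -/
noncomputable def reState {n : Type*} (ρ : Matrix n n ℂ) : Matrix n n ℂ :=
  ((1 : ℂ)/2) • (ρ + mconj ρ)

/-- The imaginarity measure `M_Re(ρ) = 1 - F(ρ, Re(ρ))`. -/
noncomputable def MRe {n : Type*} [Fintype n] [DecidableEq n] (ρ : Matrix n n ℂ) : ℝ :=
  1 - fidelity ρ (reState ρ)

/-- A density matrix: positive semidefinite with trace 1. -/
def IsDensityMatrix {n : Type*} [Fintype n] (ρ : Matrix n n ℂ) : Prop :=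
  ρ.PosSemidef ∧ ρ.trace = 1


-- Cayley-Hamilton for 2x2
lemma ch2 (A : Matrix (Fin 2) (Fin 2) ℂ) : A * A = A.trace • A - A.det • 1 := by
  ext i j
  fin_cases i <;> fin_cases j <;>
    simp [Matrix.mul_apply, Fin.sum_univ_two, Matrix.trace_fin_two, Matrix.det_fin_two,
      Matrix.one_apply] <;> ring

-- PSD basics
lemma herm_trace_real {M : Matrix (Fin 2) (Fin 2) ℂ} (h : M.IsHermitian) :
    M.trace = (M.trace.re : ℂ) := by
  have : M.trace = star M.trace := by
    conv_lhs => rw [← h.eq]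
    rw [Matrix.trace_conjTranspose]
  exact (Complex.conj_eq_iff_re.mp this.symm).symm

lemma psd_det_real {M : Matrix (Fin 2) (Fin 2) ℂ} (h : M.PosSemidef) :
    M.det = (Real.sqrt M.det.re ^ 2 : ℝ) := by
  have h1 := h.1.det_eq_prod_eigenvalues
  have h2 : M.det = ((∏ i, h.1.eigenvalues i : ℝ) : ℂ) := by rw [h1]; norm_cast
  have h3 : 0 ≤ ∏ i, h.1.eigenvalues i := Finset.prod_nonneg fun i _ => h.eigenvalues_nonneg i
  have h4 : M.det.re = ∏ i, h.1.eigenvalues i := by rw [h2]; exact Complex.ofReal_re _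
  rw [h4, Real.sq_sqrt h3]; exact h2

lemma psd_det_re_nonneg {M : Matrix (Fin 2) (Fin 2) ℂ} (h : M.PosSemidef) : 0 ≤ M.det.re := by
  have h2 := congrArg Complex.re (psd_det_real h)
  rw [Complex.ofReal_re] at h2
  rw [h2]; positivity

lemma psd_diag_nonneg {M : Matrix (Fin 2) (Fin 2) ℂ} (h : M.PosSemidef) (i : Fin 2) :
    0 ≤ (M i i).re := by
  have h1 := h.dotProduct_mulVec_nonneg (Pi.single i 1)
  rw [Complex.le_def] at h1
  have h2 : star (Pi.single i 1 : Fin 2 → ℂ) ⬝ᵥ M *ᵥ Pi.single i 1 = M i i := by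
    fin_cases i <;>
      simp [dotProduct, Matrix.mulVec, Fin.sum_univ_two, Pi.single_apply]
  rw [h2] at h1
  exact h1.1

lemma psd_trace_re_nonneg {M : Matrix (Fin 2) (Fin 2) ℂ} (h : M.PosSemidef) :
    0 ≤ M.trace.re := by
  have h0 := psd_diag_nonneg h 0
  have h1 := psd_diag_nonneg h 1
  rw [Matrix.trace_fin_two]
  simp only [Complex.add_re]
  linarith

lemma psd_smul_real {M : Matrix (Fin 2) (Fin 2) ℂ} (h : M.PosSemidef) {r : ℝ} (hr : 0 ≤ r) :
    ((r : ℂ) • M).PosSemidef := by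
  refine Matrix.PosSemidef.of_dotProduct_mulVec_nonneg ?_ (fun x => ?_)
  · have := h.1
    simp only [Matrix.IsHermitian, Matrix.conjTranspose_smul] at *
    rw [this]
    congr 1
    simp
  · have h2 : star x ⬝ᵥ ((r : ℂ) • M) *ᵥ x = (r : ℂ) * (star x ⬝ᵥ M *ᵥ x) := by
      rw [Matrix.smul_mulVec, dotProduct_smul, smul_eq_mul]
    rw [h2]
    exact mul_nonneg (by rw [Complex.le_def]; simp [hr]) (h.dotProduct_mulVec_nonneg x)

lemma psd_smul_one {r : ℝ} (hr : 0 ≤ r) :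
    ((r : ℂ) • (1 : Matrix (Fin 2) (Fin 2) ℂ)).PosSemidef :=
  psd_smul_real Matrix.PosSemidef.one hr

open scoped MatrixOrder in
lemma trace_psqrt {M : Matrix (Fin 2) (Fin 2) ℂ} (hM : M.PosSemidef) :
    (psqrt M).trace = (Real.sqrt (M.trace.re + 2 * Real.sqrt M.det.re) : ℂ) := by
  have hpsq : psqrt M = CFC.sqrt M := dif_pos hM
  set t := M.trace.re with hts
  set d := M.det.re with hds
  have hd : 0 ≤ d := psd_det_re_nonneg hM
  have ht : 0 ≤ t := psd_trace_re_nonneg hM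
  set δ := Real.sqrt d with hδs
  have hδ : 0 ≤ δ := Real.sqrt_nonneg _
  by_cases h0 : M = 0
  · subst h0
    have hz : (0 : Matrix (Fin 2) (Fin 2) ℂ) = CFC.sqrt 0 :=
      (CFC.sqrt_unique (a := (0 : Matrix (Fin 2) (Fin 2) ℂ)) (b := 0) (by simp) le_rfl).symm
    rw [hpsq, ← hz]
    simp [hts, hds, hδs]
  · have ht' : 0 < t := by
      rcases lt_or_eq_of_le ht with h | h
      · exact h
      · exfalso
        apply h0
        -- trace zero implies diagonal zero implies M = 0
        have h00 := psd_diag_nonneg hM 0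
        have h11 := psd_diag_nonneg hM 1
        have htr : (M 0 0).re + (M 1 1).re = 0 := by
          have : M.trace.re = (M 0 0).re + (M 1 1).re := by
            rw [Matrix.trace_fin_two]; simp
          rw [← this, ← hts, ← h]
        have e00 : (M 0 0).re = 0 := by linarith
        have e11 : (M 1 1).re = 0 := by linarith
        have him0 : (M 0 0).im = 0 := by
          have h' := congrArg Complex.im (hM.1.apply 0 0); simp at h'; linarith
        have him1 : (M 1 1).im = 0 := by
          have h' := congrArg Complex.im (hM.1.apply 1 1); simp at h'; linarith
        have hM00 : M 0 0 = 0 := Complex.ext e00 him0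
        have hM11 : M 1 1 = 0 := Complex.ext e11 him1
        have hdet : M.det = - (M 0 1 * M 1 0) := by
          rw [Matrix.det_fin_two, hM00, hM11]; ring
        have h10 : M 1 0 = starRingEnd ℂ (M 0 1) := by symm; simpa using hM.1.apply 1 0
        have habs : M.det.re = - Complex.normSq (M 0 1) := by
          rw [hdet, h10]
          simp [Complex.normSq_apply, Complex.mul_re]
        have h01 : M 0 1 = 0 := by
          have : Complex.normSq (M 0 1) ≤ 0 := by rw [← hds] at habs; linarith [hd, habs.symm.le]
          exact Complex.normSq_eq_zero.mp (le_antisymm this (Complex.normSq_nonneg _))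
        have h10' : M 1 0 = 0 := by rw [h10, h01]; simp
        ext i j
        fin_cases i <;> fin_cases j <;> simp [hM00, hM11, h01, h10']
    set c := Real.sqrt (t + 2 * δ) with hcs
    have hc2 : c ^ 2 = t + 2 * δ := Real.sq_sqrt (by linarith)
    have hc : 0 < c := Real.sqrt_pos.mpr (by linarith)
    set S : Matrix (Fin 2) (Fin 2) ℂ := ((c⁻¹ : ℝ) : ℂ) • (M + ((δ : ℝ) : ℂ) • 1) with hSs
    have hSpsd : S.PosSemidef :=
      psd_smul_real (hM.add (psd_smul_one hδ)) (by positivity)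
    have hS2 : S ^ 2 = M := by
      have hch := ch2 M
      have htrM : M.trace = (t : ℂ) := herm_trace_real hM.1
      have hdetM : M.det = ((δ ^ 2 : ℝ) : ℂ) := by rw [psd_det_real hM]
      have hdetM' : M.det = ((δ:ℝ):ℂ) ^ 2 := by rw [hdetM]; push_cast; ring
      have hsq : (M + ((δ:ℝ):ℂ) • 1) * (M + ((δ:ℝ):ℂ) • 1)
          = ((t:ℂ) + 2*((δ:ℝ):ℂ)) • M := by
        simp only [Matrix.add_mul, Matrix.mul_add, Matrix.smul_mul, Matrix.mul_smul,
          Matrix.mul_one, Matrix.one_mul, smul_smul, hch, htrM, hdetM']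
        module
      have hsq2 : (M + ((δ:ℝ):ℂ) • 1) ^ 2 = ((t:ℂ) + 2*((δ:ℝ):ℂ)) • M := by
        rw [pow_two, hsq]
      have hr : (c⁻¹)^2 * (t + 2*δ) = 1 := by
        rw [inv_pow, hc2]
        field_simp
      have hrC : ((c⁻¹:ℝ):ℂ)^2 * ((t:ℂ) + 2*((δ:ℝ):ℂ)) = 1 := by
        exact_mod_cast congrArg (Complex.ofReal) hr
      rw [hSs, smul_pow, hsq2, smul_smul, hrC, one_smul]
    have hSeq : S = CFC.sqrt M :=
      (CFC.sqrt_unique (by rw [← pow_two]; exact hS2) (Matrix.nonneg_iff_posSemidef.mpr hSpsd)).symm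
    rw [hpsq, ← hSeq, hSs]
    rw [Matrix.trace_smul, Matrix.trace_add, Matrix.trace_smul, Matrix.trace_one, herm_trace_real hM.1]
    have hre : c⁻¹ * (t + δ * 2) = c := by
      rw [pow_two] at hc2
      field_simp
      linarith
    simp only [smul_eq_mul, Fintype.card_fin, Nat.cast_ofNat, ← hts]
    have hreC := congrArg (Complex.ofReal) hre
    push_cast at hreC ⊢
    linear_combination hreC

open scoped MatrixOrder in
lemma fid_sq {ρ σ : Matrix (Fin 2) (Fin 2) ℂ} (hρ : ρ.PosSemidef) (hσ : σ.PosSemidef) :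
    (((psqrt (psqrt ρ * σ * psqrt ρ)).trace).re) ^ 2
      = (ρ * σ).trace.re + 2 * Real.sqrt (ρ.det.re * σ.det.re) := by
  have hpsq : psqrt ρ = CFC.sqrt ρ := dif_pos hρ
  set S := CFC.sqrt ρ with hSs
  have hSh : Sᴴ = S := (Matrix.nonneg_iff_posSemidef.mp (CFC.sqrt_nonneg ρ)).1
  have hMpsd : (S * σ * S).PosSemidef := by
    have := hσ.conjTranspose_mul_mul_same S
    rwa [hSh] at this
  have htr : (S * σ * S).trace = (ρ * σ).trace := by
    rw [Matrix.trace_mul_comm, ← Matrix.mul_assoc, CFC.sqrt_mul_sqrt_self ρ (Matrix.nonneg_iff_posSemidef.mpr hρ), Matrix.trace_mul_comm]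
  have hdet : (S * σ * S).det = ρ.det * σ.det := by
    rw [Matrix.det_mul, Matrix.det_mul]
    have : S.det * S.det = ρ.det := by rw [← Matrix.det_mul, CFC.sqrt_mul_sqrt_self ρ (Matrix.nonneg_iff_posSemidef.mpr hρ)]
    rw [mul_assoc, mul_comm σ.det, ← mul_assoc, this]
  have hdre : (S * σ * S).det.re = ρ.det.re * σ.det.re := by
    have i1 : ρ.det.im = 0 := by
      have := congrArg Complex.im (psd_det_real hρ); simpa [← Complex.ofReal_pow] using this
    have i2 : σ.det.im = 0 := by
      have := congrArg Complex.im (psd_det_real hσ); simpa [← Complex.ofReal_pow] using this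
    rw [hdet, Complex.mul_re, i1, i2]
    ring
  have h1 : ((psqrt (psqrt ρ * σ * psqrt ρ)).trace).re
      = Real.sqrt ((ρ * σ).trace.re + 2 * Real.sqrt (ρ.det.re * σ.det.re)) := by
    rw [hpsq, trace_psqrt hMpsd, Complex.ofReal_re, htr, hdre]
  rw [h1, Real.sq_sqrt]
  have h2 : 0 ≤ (ρ * σ).trace.re := by
    rw [← htr]; exact psd_trace_re_nonneg hMpsd
  positivity

lemma quad_nonneg (a c br bi p q u v : ℝ) (ha : 0 ≤ a) (hc : 0 ≤ c)
    (hdet : br^2 + bi^2 ≤ a*c) :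
    0 ≤ a*(p^2+q^2) + c*(u^2+v^2) + 2*(br*(p*u+q*v) + bi*(p*v-q*u)) := by
  rcases eq_or_lt_of_le ha with h | h
  · have hbr : br = 0 ∧ bi = 0 := by constructor <;> nlinarith [sq_nonneg br, sq_nonneg bi]
    rw [hbr.1, hbr.2, ← h]
    nlinarith [sq_nonneg u, sq_nonneg v, sq_nonneg p, sq_nonneg q]
  · have key : a * (a*(p^2+q^2) + c*(u^2+v^2) + 2*(br*(p*u+q*v) + bi*(p*v-q*u)))
        = (a*p + br*u + bi*v)^2 + (a*q + br*v - bi*u)^2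
          + (a*c - br^2 - bi^2)*(u^2+v^2) := by ring
    nlinarith [sq_nonneg (a*p + br*u + bi*v), sq_nonneg (a*q + br*v - bi*u),
      mul_nonneg (by linarith : (0:ℝ) ≤ a*c - br^2 - bi^2) (by positivity : (0:ℝ) ≤ u^2+v^2), key]

lemma posSemidef_fin_two {A : Matrix (Fin 2) (Fin 2) ℂ} (h : A.IsHermitian)
    (h00 : 0 ≤ (A 0 0).re) (h11 : 0 ≤ (A 1 1).re) (hdet : 0 ≤ A.det.re) :
    A.PosSemidef := by
  have e00 : (A 0 0).im = 0 := by
    have h' := congrArg Complex.im (h.apply 0 0); simp at h'; linarith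
  have e11 : (A 1 1).im = 0 := by
    have h' := congrArg Complex.im (h.apply 1 1); simp at h'; linarith
  have e10 : A 1 0 = starRingEnd ℂ (A 0 1) := by symm; simpa using h.apply 1 0
  have hdet' : (A 0 1).re^2 + (A 0 1).im^2 ≤ (A 0 0).re * (A 1 1).re := by
    have : A.det.re = (A 0 0).re * (A 1 1).re - ((A 0 1).re^2 + (A 0 1).im^2) := by
      rw [Matrix.det_fin_two, e10]
      simp [Complex.mul_re, e00, e11]
      ring
    linarith [hdet, this.symm.le, this.le]
  refine Matrix.PosSemidef.of_dotProduct_mulVec_nonneg h (fun x => ?_)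
  rw [Complex.le_def]
  constructor
  · have key := quad_nonneg ((A 0 0).re) ((A 1 1).re) ((A 0 1).re) (-(A 0 1).im)
      ((x 0).re) ((x 0).im) ((x 1).re) ((x 1).im) h00 h11 (by nlinarith [hdet'])
    simp only [dotProduct, Matrix.mulVec, Fin.sum_univ_two, Pi.star_apply,
      Complex.zero_re, Complex.add_re, Complex.mul_re, Complex.add_im, Complex.mul_im,
      RCLike.star_def, Complex.conj_re, Complex.conj_im, e10, e00, e11]
    nlinarith [key]
  · simp only [dotProduct, Matrix.mulVec, Fin.sum_univ_two, Pi.star_apply,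
      Complex.zero_im, Complex.add_im, Complex.mul_im, Complex.add_re, Complex.mul_re,
      RCLike.star_def, Complex.conj_re, Complex.conj_im, e10, e00, e11]
    ring

set_option maxHeartbeats 1000000 in
theorem stmt12 (rx ry rz : ℝ) (hr : rx ^ 2 + ry ^ 2 + rz ^ 2 ≤ 1) (hy : |ry| < 1) :
    (∀ σ : Matrix (Fin 2) (Fin 2) ℂ, IsDensityMatrix σ → σ = mconj σ →
      fidelity (((1:ℂ)/2) • !![1 + (rz:ℂ), (rx:ℂ) - Complex.I * (ry:ℂ); (rx:ℂ) + Complex.I * (ry:ℂ), 1 - (rz:ℂ)] : Matrix (Fin 2) (Fin 2) ℂ) σ ^ 2 ≤ (1 + Real.sqrt (1 - ry ^ 2)) / 2) ∧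
    fidelity (((1:ℂ)/2) • !![1 + (rz:ℂ), (rx:ℂ) - Complex.I * (ry:ℂ); (rx:ℂ) + Complex.I * (ry:ℂ), 1 - (rz:ℂ)] : Matrix (Fin 2) (Fin 2) ℂ)
      (((1:ℂ)/2) • !![1 + ((rz / Real.sqrt (1 - ry ^ 2) : ℝ) : ℂ), ((rx / Real.sqrt (1 - ry ^ 2) : ℝ) : ℂ); ((rx / Real.sqrt (1 - ry ^ 2) : ℝ) : ℂ), 1 - ((rz / Real.sqrt (1 - ry ^ 2) : ℝ) : ℂ)] : Matrix (Fin 2) (Fin 2) ℂ) ^ 2 = (1 + Real.sqrt (1 - ry ^ 2)) / 2 := by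
  set ρ : Matrix (Fin 2) (Fin 2) ℂ :=
    ((1:ℂ)/2) • !![1 + (rz:ℂ), (rx:ℂ) - Complex.I * (ry:ℂ); (rx:ℂ) + Complex.I * (ry:ℂ), 1 - (rz:ℂ)] with hρdef
  have hrz2 : rz ^ 2 ≤ 1 := by nlinarith [sq_nonneg rx, sq_nonneg ry]
  have hrz : |rz| ≤ 1 := abs_le.mpr (by constructor <;> nlinarith [sq_nonneg (rz+1), sq_nonneg (rz-1)])
  have hρherm : ρ.IsHermitian := by
    rw [hρdef]
    ext i j
    fin_cases i <;> fin_cases j <;>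
      simp [Matrix.conjTranspose_apply, Complex.ext_iff]
  have hρdet : ρ.det.re = (1 - rx^2 - ry^2 - rz^2)/4 := by
    rw [hρdef]
    simp [Matrix.det_fin_two, Complex.ext_iff, Complex.mul_re, Complex.mul_im]
    ring
  have hρpsd : ρ.PosSemidef := by
    refine posSemidef_fin_two hρherm ?_ ?_ ?_
    · rw [hρdef]; simp; linarith [abs_le.mp hrz]
    · rw [hρdef]; simp; linarith [abs_le.mp hrz]

    · rw [hρdet]; nlinarith
  have hs : 0 < Real.sqrt (1 - ry ^ 2) := Real.sqrt_pos.mpr (by obtain ⟨h1, h2⟩ := abs_lt.mp hy; nlinarith)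
  set s := Real.sqrt (1 - ry ^ 2) with hsdef
  have hs2 : s ^ 2 = 1 - ry ^ 2 := Real.sq_sqrt (by obtain ⟨h1, h2⟩ := abs_lt.mp hy; nlinarith)
  constructor
  · intro σ hσ hreal
    have hσpsd := hσ.1
    have him : ∀ i j, (σ i j).im = 0 := by
      intro i j
      have := congrArg (fun M => (M i j).im) hreal
      simp [mconj, Matrix.map_apply] at this
      linarith
    have h10 : σ 1 0 = σ 0 1 := by
      have h1 : σ 1 0 = (starRingEnd ℂ) (σ 0 1) := by symm; simpa using hσpsd.1.apply 1 0
      apply Complex.ext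
      · rw [h1]; simp
      · rw [him, him]
    have htr1 : (σ 0 0).re + (σ 1 1).re = 1 := by
      have := congrArg Complex.re hσ.2
      simpa [Matrix.trace_fin_two] using this
    have hdetσ : σ.det.re = (σ 0 0).re * (σ 1 1).re - (σ 0 1).re ^ 2 := by
      rw [Matrix.det_fin_two, h10]
      simp [Complex.mul_re, him]
      ring
    have hdσ : 0 ≤ σ.det.re := psd_det_re_nonneg hσpsd
    have hTr : (ρ * σ).trace.re
        = ((1+rz)*(σ 0 0).re + (1-rz)*(σ 1 1).re + 2*rx*(σ 0 1).re)/2 := by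
      rw [hρdef, Matrix.trace_fin_two]
      simp [Matrix.mul_apply, Fin.sum_univ_two, Complex.mul_re, Complex.mul_im, him, h10]
      ring
    have hfs := fid_sq hρpsd hσpsd
    rw [show fidelity ρ σ = ((psqrt (psqrt ρ * σ * psqrt ρ)).trace).re from rfl, hfs, hTr, hρdet]
    set p := (σ 0 0).re
    set q := (σ 1 1).re
    set w := (σ 0 1).re
    set a2 := Real.sqrt σ.det.re with ha2def
    have ha2 : a2 ^ 2 = p * q - w ^ 2 := by rw [ha2def, Real.sq_sqrt hdσ, hdetσ]
    have ha2n : 0 ≤ a2 := Real.sqrt_nonneg _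
    have hD : 0 ≤ (1 - rx^2 - ry^2 - rz^2)/4 := by nlinarith
    set a1 := Real.sqrt ((1 - rx^2 - ry^2 - rz^2)/4) with ha1def
    have ha1 : a1 ^ 2 = (1 - rx^2 - ry^2 - rz^2)/4 := Real.sq_sqrt hD
    have ha1n : 0 ≤ a1 := Real.sqrt_nonneg _
    have hsqrtmul : Real.sqrt ((1 - rx^2 - ry^2 - rz^2)/4 * σ.det.re) = a1 * a2 := by
      rw [Real.sqrt_mul hD, ha1def, ha2def]
    rw [hsqrtmul]
    -- Cauchy-Schwarz finish
    have cs : (rz*(p-q) + 2*rx*w + 4*(a1*a2))^2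
        ≤ (rz^2+rx^2+4*a1^2)*((p-q)^2+4*w^2+4*a2^2) := by
      nlinarith [sq_nonneg (rz*(2*w) - rx*(p - q)), sq_nonneg (rz*(2*a2) - 2*a1*(p-q)),
        sq_nonneg (rx*(2*a2) - 2*a1*(2*w))]
    have h1 : rz^2+rx^2+4*a1^2 = s^2 := by linear_combination 4*ha1 - hs2
    have h2 : (p-q)^2+4*w^2+4*a2^2 = 1 := by linear_combination 4*ha2 + (p + q + 1) * htr1
    rw [h1, h2, mul_one] at cs
    nlinarith [cs, hs.le]
  · set τ : Matrix (Fin 2) (Fin 2) ℂ :=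
      ((1:ℂ)/2) • !![1 + ((rz / s : ℝ) : ℂ), ((rx / s : ℝ) : ℂ);
        ((rx / s : ℝ) : ℂ), 1 - ((rz / s : ℝ) : ℂ)] with hτdef
    have hxz : rx^2 + rz^2 ≤ s^2 := by nlinarith [hs2]
    have hzs : |rz| ≤ s := by
      rw [abs_le]; constructor <;> nlinarith [sq_nonneg (rz - s), sq_nonneg (rz + s)]
    have habs : |rz / s| ≤ 1 := by
      rw [abs_div, abs_of_pos hs]; exact (div_le_one hs).mpr hzs
    have hτherm : τ.IsHermitian := by
      rw [hτdef]
      ext i j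
      fin_cases i <;> fin_cases j <;>
        simp [Matrix.conjTranspose_apply, Complex.ext_iff]
    have hτdet : τ.det.re = (1 - (rx/s)^2 - (rz/s)^2)/4 := by
      rw [hτdef]
      simp [Matrix.det_fin_two, Complex.ext_iff, Complex.mul_re, Complex.mul_im]
      ring
    have hτdetnn : 0 ≤ τ.det.re := by
      rw [hτdet]
      have h1 : (rx/s)^2 + (rz/s)^2 = (rx^2+rz^2)/s^2 := by ring
      have h2 : (rx^2+rz^2)/s^2 ≤ 1 := (div_le_one (by positivity)).mpr hxz
      nlinarith [h1, h2]
    have hτpsd : τ.PosSemidef := by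
      refine posSemidef_fin_two hτherm ?_ ?_ hτdetnn
      · rw [hτdef]; simp; linarith [abs_le.mp habs]
      · rw [hτdef]; simp; linarith [abs_le.mp habs]
    have hTrτ : (ρ * τ).trace.re = (1 + rz*(rz/s) + rx*(rx/s))/2 := by
      rw [hρdef, hτdef, Matrix.trace_fin_two]
      simp [Matrix.mul_apply, Fin.sum_univ_two, Complex.mul_re, Complex.mul_im]
      ring
    have hfs := fid_sq hρpsd hτpsd
    rw [show fidelity ρ τ = ((psqrt (psqrt ρ * τ * psqrt ρ)).trace).re from rfl, hfs, hTrτ, hρdet]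
    have e : 1-rx^2-ry^2-rz^2 = s^2 - rx^2 - rz^2 := by linarith [hs2]
    have hprod : ρ.det.re * τ.det.re = ((s^2-rx^2-rz^2)/(4*s))^2 := by
      rw [hρdet, hτdet, e]
      field_simp
    rw [hρdet] at hprod
    rw [hprod, Real.sqrt_sq (div_nonneg (by nlinarith) (by positivity))]
    field_simp
    ring
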